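/- Let α > 0, c > 0, t > 0. For the quadratic functional S(u,s,t) = -(ct/24)∫₀^{2π} u'(x)² dx - (1/2)u(x₁) - (1/2)u(x₂) + u(s) over functions u with u(x+2π) = u(x)+2πα, where x₁ < s < x₂ in [0,2π], the continuous piecewise-linear critical point u_cl (linear away from x₁, s, x₂, with derivative jumps +6/(ct) at x₁ and x₂ and -12/(ct) at s, and quasi-periodic) has slope m(s) = α - (3/(ctπ))(2s - x₁ - x₂) on [0,x₁], and the critical value is S(u_cl,s,t) = (3/(2ct))(x₂-x₁) - (3/(4πct))·(2s - x₁ - x₂ - (ctπ/3)α)². -/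

import Mathlib

open Real

private lemma deriv_affine_of_eventually (u : ℝ → ℝ) (A B x : ℝ)
    (h : u =ᶠ[nhds x] fun y => A * y + B) : deriv u x = A := by
  rw [Filter.EventuallyEq.deriv_eq h]
  simpa using (((hasDerivAt_id x).const_mul A).add_const B).deriv

theorem piecewise_linear_critical_point (α c t : ℝ) (hα : 0 < α) (hc : 0 < c) (ht : 0 < t)
    (x₁ s x₂ : ℝ) (h0 : 0 ≤ x₁) (h1 : x₁ < s) (h2 : s < x₂) (h3 : x₂ ≤ 2*π)
    (n : ℝ) (m a b : ℝ)
    (hm : m = α - 3/(c*t*π) * (2*s - x₁ - x₂))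
    (ha : a = m + 6/(c*t)) (hb : b = m - 6/(c*t))
    (u : ℝ → ℝ)
    (hu : ∀ x, u x =
      if x ≤ x₁ then m*x + n
      else if x ≤ s then m*x₁ + n + a*(x - x₁)
      else if x ≤ x₂ then m*x₁ + n + a*(s - x₁) + b*(x - s)
      else m*x₁ + n + a*(s - x₁) + b*(x₂ - s) + m*(x - x₂)) :
    -- quasi-periodicity over one period
    u (2*π) = u 0 + 2*π*α ∧
    -- slope on the initial segment
    (∀ x ∈ Set.Ioo 0 x₁, deriv u x = m) ∧
    -- the critical value of the functional
    -(c*t/24) * (∫ x in (0:ℝ)..(2*π), (deriv u x)^2)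
        - (1/2) * u x₁ - (1/2) * u x₂ + u s
      = 3/(2*c*t) * (x₂ - x₁)
        - 3/(4*π*c*t) * (2*s - x₁ - x₂ - (c*t*π/3)*α)^2 := by
  have hπ : (0:ℝ) < π := Real.pi_pos
  have hct : c * t ≠ 0 := by positivity
  have hπ' : π ≠ 0 := ne_of_gt hπ
  -- derivative facts
  have hd1 : ∀ x, x < x₁ → deriv u x = m := by
    intro x hx
    apply deriv_affine_of_eventually u m n
    filter_upwards [Iio_mem_nhds hx] with y hy
    rw [hu y, if_pos (le_of_lt hy)]
  have hd2 : ∀ x, x₁ < x → x < s → deriv u x = a := by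
    intro x hx1 hx2
    apply deriv_affine_of_eventually u a (m*x₁ + n - a*x₁)
    filter_upwards [Ioo_mem_nhds hx1 hx2] with y hy
    rw [hu y, if_neg (not_le.2 hy.1), if_pos (le_of_lt hy.2)]; ring
  have hd3 : ∀ x, s < x → x < x₂ → deriv u x = b := by
    intro x hx1 hx2
    apply deriv_affine_of_eventually u b (m*x₁ + n + a*(s-x₁) - b*s)
    filter_upwards [Ioo_mem_nhds hx1 hx2] with y hy
    rw [hu y, if_neg (by linarith [hy.1] : ¬ y ≤ x₁), if_neg (not_le.2 hy.1),
      if_pos (le_of_lt hy.2)]; ring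
  have hd4 : ∀ x, x₂ < x → deriv u x = m := by
    intro x hx
    apply deriv_affine_of_eventually u m (m*x₁ + n + a*(s-x₁) + b*(x₂-s) - m*x₂)
    filter_upwards [Ioi_mem_nhds hx] with y hy
    rw [hu y, if_neg (by linarith [Set.mem_Ioi.1 hy] : ¬ y ≤ x₁),
      if_neg (by linarith [Set.mem_Ioi.1 hy] : ¬ y ≤ s),
      if_neg (not_le.2 hy)]; ring
  refine ⟨?_, ?_, ?_⟩
  · -- quasi-periodicity
    have hs2π : s < 2*π := lt_of_lt_of_le h2 h3
    have hx12π : x₁ < 2*π := lt_trans h1 hs2π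
    have hu0 : u 0 = n := by rw [hu 0, if_pos h0]; ring
    have hu2π : u (2*π) = m*x₁ + n + a*(s - x₁) + b*(x₂ - s) + m*(2*π - x₂) := by
      rw [hu (2*π), if_neg (not_le.2 hx12π), if_neg (not_le.2 hs2π)]
      rcases le_or_gt (2*π) x₂ with h | h
      · have : x₂ = 2*π := le_antisymm h3 h
        rw [if_pos (le_of_eq this.symm)]; rw [this]; ring
      · rw [if_neg (not_le.2 h)]
    rw [hu0, hu2π, ha, hb, hm]
    field_simp
    ring
  · intro x hx; exact hd1 x hx.2
  · -- the critical value
    set g : ℝ → ℝ := fun x =>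
      if x ≤ x₁ then m^2 else if x ≤ s then a^2 else if x ≤ x₂ then b^2 else m^2 with hg
    have hInt : (∫ x in (0:ℝ)..(2*π), (deriv u x)^2) = ∫ x in (0:ℝ)..(2*π), g x := by
      apply intervalIntegral.integral_congr_ae
      have hae : ∀ᵐ x : ℝ, x ∉ ({x₁, s, x₂} : Set ℝ) :=
        (Set.toFinite ({x₁, s, x₂} : Set ℝ)).countable.ae_notMem MeasureTheory.volume
      filter_upwards [hae] with x hx _
      have hx1 : x ≠ x₁ := fun h => hx (by simp [h])
      have hxs : x ≠ s := fun h => hx (by simp [h])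
      have hx2 : x ≠ x₂ := fun h => hx (by simp [h])
      rcases lt_or_gt_of_ne hx1 with h | h
      · rw [hd1 x h]; simp [hg, le_of_lt h]
      · rcases lt_or_gt_of_ne hxs with h' | h'
        · rw [hd2 x h h']; simp [hg, not_le.2 h, le_of_lt h']
        · rcases lt_or_gt_of_ne hx2 with h'' | h''
          · rw [hd3 x h' h'']
            simp [hg, not_le.2 (lt_trans h1 h'), not_le.2 h', le_of_lt h'']
          · rw [hd4 x h'']
            simp [hg, not_le.2 (lt_trans h1 h'), not_le.2 h',
              not_le.2 h'']
    have hgi : ∀ A B : ℝ, IntervalIntegrable g MeasureTheory.volume A B := by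
      intro A B
      apply IntervalIntegrable.mono_fun' (g := fun _ => m^2 + a^2 + b^2)
        intervalIntegrable_const
      · apply Measurable.aestronglyMeasurable
        unfold g
        exact (measurable_const.ite (measurableSet_le measurable_id measurable_const)
          ((measurable_const.ite (measurableSet_le measurable_id measurable_const)
            (measurable_const.ite (measurableSet_le measurable_id measurable_const)
              measurable_const))))
      · apply Filter.Eventually.of_forall
        intro x
        have h1 : (0:ℝ) ≤ m^2 := sq_nonneg m
        have h2 : (0:ℝ) ≤ a^2 := sq_nonneg a
        have h3 : (0:ℝ) ≤ b^2 := sq_nonneg b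
        simp only [hg, Real.norm_eq_abs]
        split_ifs <;> rw [abs_of_nonneg (by positivity)] <;> linarith
    have hseg : ∀ (A B v : ℝ), A ≤ B → (∀ x ∈ Set.Ioc A B, g x = v) →
        (∫ x in A..B, g x) = v * (B - A) := by
      intro A B v hAB hv
      rw [intervalIntegral.integral_of_le hAB,
        MeasureTheory.setIntegral_congr_fun measurableSet_Ioc hv]
      simp [Real.volume_Ioc, ENNReal.toReal_ofReal (sub_nonneg.2 hAB), mul_comm, hAB]
    have h01 : (0:ℝ) ≤ x₁ := h0
    have hx22π : x₂ ≤ 2*π := h3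
    have hsum : (∫ x in (0:ℝ)..(2*π), g x)
        = m^2 * (x₁ - 0) + a^2 * (s - x₁) + b^2 * (x₂ - s) + m^2 * (2*π - x₂) := by
      have e1 : (∫ x in (0:ℝ)..x₁, g x) = m^2 * (x₁ - 0) :=
        hseg 0 x₁ (m^2) h01 (fun x hx => by simp [hg, hx.2])
      have e2 : (∫ x in x₁..s, g x) = a^2 * (s - x₁) :=
        hseg x₁ s (a^2) h1.le (fun x hx => by simp [hg, not_le.2 hx.1, hx.2])
      have e3 : (∫ x in s..x₂, g x) = b^2 * (x₂ - s) :=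
        hseg s x₂ (b^2) h2.le
          (fun x hx => by simp [hg, not_le.2 (lt_trans h1 hx.1), not_le.2 hx.1, hx.2])
      have e4 : (∫ x in x₂..(2*π), g x) = m^2 * (2*π - x₂) :=
        hseg x₂ (2*π) (m^2) hx22π
          (fun x hx => by
            simp [hg, not_le.2 (lt_trans h1 (lt_trans h2 hx.1)),
              not_le.2 (lt_trans h2 hx.1), not_le.2 hx.1])
      rw [← intervalIntegral.integral_add_adjacent_intervals (hgi 0 x₁) (hgi x₁ (2*π)),
        ← intervalIntegral.integral_add_adjacent_intervals (hgi x₁ s) (hgi s (2*π)),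
        ← intervalIntegral.integral_add_adjacent_intervals (hgi s x₂) (hgi x₂ (2*π)),
        e1, e2, e3, e4]
      ring
    have hux1 : u x₁ = m*x₁ + n := by rw [hu x₁, if_pos le_rfl]
    have hus : u s = m*x₁ + n + a*(s - x₁) := by
      rw [hu s, if_neg (not_le.2 h1), if_pos le_rfl]
    have hux2 : u x₂ = m*x₁ + n + a*(s - x₁) + b*(x₂ - s) := by
      rw [hu x₂, if_neg (not_le.2 (lt_trans h1 h2)), if_neg (not_le.2 h2), if_pos le_rfl]
    rw [hInt, hsum, hux1, hus, hux2, ha, hb, hm]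
    field_simp
    ring
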